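/- Let k be a field, G a group, and (H_i)_{0 ≤ i ≤ n} a decreasing Hopf algebra filtration of the group algebra kG with H_n = 0. Let V be a Yetter–Drinfeld module over kG with coaction δ : V → kG ⊗ V determined by δ(v) = x ⊗ v for v ∈ V_x, and set F^iV = H_iV for all i ≥ 0. Then: (i) δ(F^iV) ⊆ Σ_{k≥0} H_k ⊗ F^{i−k}V for all i ≥ 0; and (ii) (F^iV)_{i≥0} is a decreasing filtration of the braided vector space (V, c), i.e., F^0V = V, F^iV ⊇ F^jV for i ≤ j, ∩_{i≥0} F^iV = 0, and c(F^iV ⊗ F^jV) ⊆ Σ_{k+l ≥ i+j} F^kV ⊗ F^lV for all i, j ≥ 0. -/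

import Mathlib

open TensorProduct

/-- The image `P ⊗ Q` of a tensor product of two submodules inside `M ⊗[k] N`. -/
noncomputable def subTensor14 {k : Type*} [CommSemiring k] {M N : Type*}
    [AddCommMonoid M] [Module k M] [AddCommMonoid N] [Module k N]
    (P : Submodule k M) (Q : Submodule k N) : Submodule k (M ⊗[k] N) :=
  LinearMap.range (TensorProduct.map P.subtype Q.subtype)

section Stmt14Aux

variable {k : Type*} [CommSemiring k]

lemma mem_subTensor14 {M N : Type*} [AddCommMonoid M] [Module k M] [AddCommMonoid N] [Module k N]
    {P : Submodule k M} {Q : Submodule k N} {p : M} {q : N} (hp : p ∈ P) (hq : q ∈ Q) :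
    p ⊗ₜ[k] q ∈ subTensor14 P Q :=
  ⟨(⟨p, hp⟩ : P) ⊗ₜ[k] (⟨q, hq⟩ : Q), by simp [subTensor14]⟩

lemma subTensor14_induction {M N : Type*} [AddCommMonoid M] [Module k M] [AddCommMonoid N]
    [Module k N] {P : Submodule k M} {Q : Submodule k N} {motive : M ⊗[k] N → Prop}
    {t : M ⊗[k] N} (ht : t ∈ subTensor14 P Q) (zero : motive 0)
    (add : ∀ x y, motive x → motive y → motive (x + y))
    (tmul : ∀ p ∈ P, ∀ q ∈ Q, motive (p ⊗ₜ[k] q)) : motive t := by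
  obtain ⟨u, rfl⟩ := ht
  induction u using TensorProduct.induction_on with
  | zero => simpa using zero
  | tmul p q => simpa using tmul p p.2 q q.2
  | add x y hx hy => rw [map_add]; exact add _ _ hx hy

noncomputable def tripleMap14 {A W U : Type*} [Semiring A] [Algebra k A]
    [AddCommMonoid W] [Module k W] [AddCommMonoid U] [Module k U]
    (S : A →ₗ[k] A) (xel : A) (φ : A →ₗ[k] W) (av : A →ₗ[k] U) :
    A ⊗[k] (A ⊗[k] A) →ₗ[k] W ⊗[k] U :=
  TensorProduct.map
      (φ ∘ₗ LinearMap.mul' k A ∘ₗ LinearMap.lTensor A (LinearMap.mulLeft k xel ∘ₗ S)) av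
    ∘ₗ ((TensorProduct.assoc k A A A).symm.toLinearMap
    ∘ₗ LinearMap.lTensor A (TensorProduct.comm k A A).toLinearMap)

@[simp] lemma tripleMap14_tmul {A W U : Type*} [Semiring A] [Algebra k A]
    [AddCommMonoid W] [Module k W] [AddCommMonoid U] [Module k U]
    (S : A →ₗ[k] A) (xel : A) (φ : A →ₗ[k] W) (av : A →ₗ[k] U) (a b c : A) :
    tripleMap14 S xel φ av (a ⊗ₜ[k] (b ⊗ₜ[k] c)) = φ (a * (xel * S c)) ⊗ₜ[k] av b := by
  simp [tripleMap14]

def actMap14 (k : Type*) [CommSemiring k] {A V : Type*} [Semiring A] [Algebra k A]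
    [AddCommMonoid V] [Module k V] [Module A V] [IsScalarTower k A V] (v : V) : A →ₗ[k] V where
  toFun a := a • v
  map_add' a b := add_smul a b v
  map_smul' r a := smul_assoc r a v

@[simp] lemma actMap14_apply (k : Type*) [CommSemiring k] {A V : Type*} [Semiring A]
    [Algebra k A] [AddCommMonoid V] [Module k V] [Module A V] [IsScalarTower k A V]
    (v : V) (a : A) : actMap14 k v a = a • v := rfl

lemma D2_mem {A : Type*} [AddCommMonoid A] [Module k A]
    (Δ : A →ₗ[k] A ⊗[k] A) (H : ℕ → Submodule k A)
    (hHΔ : ∀ i : ℕ, ∀ x ∈ H i, Δ x ∈ ⨆ j : Fin (i + 1), subTensor14 (H j) (H (i - (j : ℕ))))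
    (i : ℕ) (a : A) (ha : a ∈ H i) :
    LinearMap.lTensor A Δ (Δ a) ∈
      ⨆ (pqr : ℕ × ℕ × ℕ) (_ : i ≤ pqr.1 + pqr.2.1 + pqr.2.2),
        subTensor14 (H pqr.1) (subTensor14 (H pqr.2.1) (H pqr.2.2)) := by
  set Tgt : Submodule k (A ⊗[k] (A ⊗[k] A)) :=
    ⨆ (pqr : ℕ × ℕ × ℕ) (_ : i ≤ pqr.1 + pqr.2.1 + pqr.2.2),
      subTensor14 (H pqr.1) (subTensor14 (H pqr.2.1) (H pqr.2.2)) with hTgt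
  have h1 : (⨆ j : Fin (i + 1), subTensor14 (H j) (H (i - (j : ℕ)))) ≤
      Submodule.comap (LinearMap.lTensor A Δ) Tgt := by
    refine iSup_le fun j => ?_
    intro x hx
    refine subTensor14_induction
      (motive := fun y => y ∈ Submodule.comap (LinearMap.lTensor A Δ) Tgt) hx
      (Submodule.zero_mem _) (fun y z hy hz => Submodule.add_mem _ hy hz) ?_
    intro p hp q hq
    rw [Submodule.mem_comap, LinearMap.lTensor_tmul]
    have h2 : (⨆ m : Fin ((i - (j : ℕ)) + 1), subTensor14 (H m) (H ((i - (j : ℕ)) - (m : ℕ)))) ≤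
        Submodule.comap (TensorProduct.mk k A (A ⊗[k] A) p) Tgt := by
      refine iSup_le fun m => ?_
      intro y hy
      rw [Submodule.mem_comap, TensorProduct.mk_apply]
      apply Submodule.mem_iSup_of_mem ((j : ℕ), (m : ℕ), (i - (j : ℕ)) - (m : ℕ))
      have hj := j.2
      have hm := m.2
      exact Submodule.mem_iSup_of_mem (by simp; omega) (mem_subTensor14 hp hy)
    exact h2 (hHΔ (i - (j : ℕ)) q hq)
  exact h1 (hHΔ i a ha)

lemma transport14 {A W : Type*} [AddCommMonoid A] [Module k A] [AddCommMonoid W] [Module k W]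
    (H : ℕ → Submodule k A) (Φ : A ⊗[k] (A ⊗[k] A) →ₗ[k] W) (Tgt : Submodule k W) (i : ℕ)
    (hpure : ∀ p q r : ℕ, i ≤ p + q + r → ∀ a ∈ H p, ∀ b ∈ H q, ∀ c ∈ H r,
      Φ (a ⊗ₜ[k] (b ⊗ₜ[k] c)) ∈ Tgt)
    {t : A ⊗[k] (A ⊗[k] A)}
    (ht : t ∈ ⨆ (pqr : ℕ × ℕ × ℕ) (_ : i ≤ pqr.1 + pqr.2.1 + pqr.2.2),
        subTensor14 (H pqr.1) (subTensor14 (H pqr.2.1) (H pqr.2.2))) :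
    Φ t ∈ Tgt := by
  have h1 : (⨆ (pqr : ℕ × ℕ × ℕ) (_ : i ≤ pqr.1 + pqr.2.1 + pqr.2.2),
      subTensor14 (H pqr.1) (subTensor14 (H pqr.2.1) (H pqr.2.2))) ≤
      Submodule.comap Φ Tgt := by
    refine iSup_le fun pqr => iSup_le fun hcond => ?_
    obtain ⟨p, q, r⟩ := pqr
    intro x hx
    refine subTensor14_induction (motive := fun y => y ∈ Submodule.comap Φ Tgt) hx
      (Submodule.zero_mem _) (fun y z hy hz => Submodule.add_mem _ hy hz) ?_
    intro a ha y hy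
    rw [Submodule.mem_comap]
    refine subTensor14_induction (motive := fun y => Φ (a ⊗ₜ[k] y) ∈ Tgt) hy ?_ ?_ ?_
    · show Φ (a ⊗ₜ[k] (0 : A ⊗[k] A)) ∈ Tgt
      rw [TensorProduct.tmul_zero, map_zero]; exact Submodule.zero_mem _
    · intro y z hy hz
      show Φ (a ⊗ₜ[k] (y + z)) ∈ Tgt
      rw [TensorProduct.tmul_add, map_add]; exact Submodule.add_mem _ hy hz
    · intro b hb cc hcc; exact hpure p q r hcond a ha b hb cc hcc
  exact h1 ht

end Stmt14Aux

/-- The subspace `N V` of a module `V` spanned by products `a • v` with `a` in a subspace `N`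
of the acting algebra. -/
def subSMul14 {k : Type*} [CommSemiring k] {A : Type*} [Semiring A] [Algebra k A]
    {V : Type*} [AddCommMonoid V] [Module k V] [Module A V] [IsScalarTower k A V]
    (N : Submodule k A) : Submodule k V :=
  Submodule.span k {w : V | ∃ a ∈ N, ∃ v : V, w = a • v}

/-- Let `k` be a field, `G` a group, and `(H_i)_{0 ≤ i ≤ n}` a decreasing Hopf
algebra filtration of `kG` with `H_n = 0`. Let `V` be a Yetter–Drinfeld module over `kG` with
coaction `δ` (`δ(v) = x ⊗ v` for `v ∈ V_x`) and braiding `c`, and set `F^iV = H_iV`. Then: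
(i) `δ(F^iV) ⊆ Σ_{k≥0} H_k ⊗ F^{i−k}V`; and (ii) `(F^iV)` is a decreasing filtration of the
braided vector space `(V, c)`. -/
theorem stmt14 {k : Type*} [Field k] {G : Type*} [Group G] [DecidableEq G]
    -- the structure maps of the Hopf algebra kG
    (Δ : MonoidAlgebra k G →ₗ[k] MonoidAlgebra k G ⊗[k] MonoidAlgebra k G)
    (hΔ : ∀ g : G, Δ (MonoidAlgebra.of k G g) =
      MonoidAlgebra.of k G g ⊗ₜ[k] MonoidAlgebra.of k G g)
    (ε : MonoidAlgebra k G →ₗ[k] k)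
    (hε : ∀ g : G, ε (MonoidAlgebra.of k G g) = 1)
    (S : MonoidAlgebra k G →ₗ[k] MonoidAlgebra k G)
    (hS : ∀ g : G, S (MonoidAlgebra.of k G g) = MonoidAlgebra.of k G g⁻¹)
    -- (H_i) is a decreasing Hopf algebra filtration of kG with H_n = 0
    (H : ℕ → Submodule k (MonoidAlgebra k G)) (n : ℕ) (hn : 1 ≤ n)
    (hH0 : H 0 = ⊤)
    (hHdec : Antitone H)
    (hHmul : ∀ i j : ℕ, H i * H j ≤ H (i + j))
    (hHΔ : ∀ i : ℕ, ∀ x ∈ H i, Δ x ∈ ⨆ j : Fin (i + 1), subTensor14 (H j) (H (i - (j : ℕ))))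
    (hHε : ∀ i : ℕ, 1 ≤ i → ∀ x ∈ H i, ε x = 0)
    (hHS : ∀ i : ℕ, 1 ≤ i → ∀ x ∈ H i, S x ∈ H i)
    (hHn : H n = ⊥)
    -- V is a Yetter--Drinfeld module over kG with coaction δ and braiding c
    {V : Type*} [AddCommGroup V] [Module k V] [Module (MonoidAlgebra k G) V]
    [IsScalarTower k (MonoidAlgebra k G) V]
    (Vx : G → Submodule k V)
    (hgrad : DirectSum.IsInternal Vx)
    (hcompat : ∀ g x : G, ∀ v ∈ Vx x, MonoidAlgebra.of k G g • v ∈ Vx (g * x * g⁻¹))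
    (δ : V →ₗ[k] MonoidAlgebra k G ⊗[k] V)
    (hδ : ∀ x : G, ∀ v ∈ Vx x, δ v = MonoidAlgebra.of k G x ⊗ₜ[k] v)
    (c : V ⊗[k] V →ₗ[k] V ⊗[k] V)
    (hc : ∀ g : G, ∀ u ∈ Vx g, ∀ v : V,
      c (u ⊗ₜ[k] v) = (MonoidAlgebra.of k G g • v) ⊗ₜ[k] u) :
    (∀ i : ℕ, ∀ w ∈ subSMul14 (V := V) (H i),
      δ w ∈ ⨆ kk : ℕ, subTensor14 (H kk) (subSMul14 (V := V) (H (i - kk)))) ∧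
    subSMul14 (V := V) (H 0) = ⊤ ∧
    (Antitone fun i => subSMul14 (V := V) (H i)) ∧
    (⨅ i : ℕ, subSMul14 (V := V) (H i)) = ⊥ ∧
    (∀ i j : ℕ,
      Submodule.map c (subTensor14 (subSMul14 (V := V) (H i)) (subSMul14 (V := V) (H j))) ≤
        ⨆ (kl : ℕ × ℕ) (_ : i + j ≤ kl.1 + kl.2),
          subTensor14 (subSMul14 (V := V) (H kl.1)) (subSMul14 (V := V) (H kl.2))) := by
  classical
  have hofmem : ∀ g : G, MonoidAlgebra.of k G g ∈ H 0 := fun g => hH0 ▸ Submodule.mem_top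
  have hS' : ∀ (r : ℕ) (cc : MonoidAlgebra k G), cc ∈ H r → S cc ∈ H r := by
    intro r cc hcc
    rcases Nat.eq_zero_or_pos r with rfl | hr
    · rw [hH0]; exact Submodule.mem_top
    · exact hHS r hr cc hcc
  have hmul3 : ∀ (p r : ℕ) (a : MonoidAlgebra k G), a ∈ H p → ∀ (x : G)
      (cc : MonoidAlgebra k G), cc ∈ H r →
      a * (MonoidAlgebra.of k G x * S cc) ∈ H (p + r) := by
    intro p r a ha x cc hcc
    have h1 : MonoidAlgebra.of k G x * S cc ∈ H r := by
      have := hHmul 0 r (Submodule.mul_mem_mul (hofmem x) (hS' r cc hcc))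
      rwa [zero_add] at this
    exact hHmul p r (Submodule.mul_mem_mul ha h1)
  have hgen : ∀ (q : ℕ) (b : MonoidAlgebra k G), b ∈ H q → ∀ v : V,
      b • v ∈ subSMul14 (V := V) (H q) :=
    fun q b hb v => Submodule.subset_span ⟨b, hb, v, rfl⟩
  have hFanti : Antitone fun i => subSMul14 (V := V) (H i) := by
    intro i j hij
    refine Submodule.span_mono ?_
    rintro w ⟨a, ha, v, rfl⟩
    exact ⟨a, hHdec hij ha, v, rfl⟩
  have hspan : ∀ (i : ℕ) (w : V), w ∈ subSMul14 (V := V) (H i) →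
      w ∈ Submodule.span k {w : V | ∃ a ∈ H i, ∃ v : V, w = a • v} := fun _ _ h => h
  have hsmulF : ∀ (s t : ℕ) (m : MonoidAlgebra k G), m ∈ H s →
      ∀ w ∈ subSMul14 (V := V) (H t), m • w ∈ subSMul14 (V := V) (H (s + t)) := by
    intro s t m hm w hw
    have hw' := hspan t w hw
    clear hw
    induction hw' using Submodule.span_induction with
    | mem w hwmem =>
        obtain ⟨b, hb, u, rfl⟩ := hwmem
        rw [← mul_smul]
        exact hgen _ _ (hHmul s t (Submodule.mul_mem_mul hm hb)) u
    | zero => rw [smul_zero]; exact Submodule.zero_mem _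
    | add x y hx hy h1 h2 => rw [smul_add]; exact Submodule.add_mem _ h1 h2
    | smul r x hx h1 => rw [smul_comm m r x]; exact Submodule.smul_mem _ r h1
  have hVtop : (⨆ x : G, Vx x) = ⊤ := hgrad.submodule_iSup_eq_top
  -- evaluation identity for the coaction
  have hΨ : ∀ (x : G) (v : V), v ∈ Vx x → ∀ a : MonoidAlgebra k G,
      δ (a • v) = tripleMap14 S (MonoidAlgebra.of k G x) LinearMap.id (actMap14 k v)
        (LinearMap.lTensor (MonoidAlgebra k G) Δ (Δ a)) := by
    intro x v hv a
    induction a using MonoidAlgebra.induction_on with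
    | of g =>
        rw [hΔ g, LinearMap.lTensor_tmul, hΔ g, tripleMap14_tmul, hS g,
          hδ _ _ (hcompat g x v hv)]
        have hgx : MonoidAlgebra.of k G (g * x * g⁻¹) =
            MonoidAlgebra.of k G g *
              (MonoidAlgebra.of k G x * MonoidAlgebra.of k G g⁻¹) := by
          rw [map_mul, map_mul, mul_assoc]
        rw [hgx]
        simp
    | add f g hf hg => simp only [add_smul, map_add, hf, hg]
    | smul r f hf => simp only [smul_assoc, map_smul, hf]
  -- evaluation identity for the braiding
  have hΘ : ∀ (x : G) (v : V), v ∈ Vx x → ∀ (w : V) (a : MonoidAlgebra k G),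
      c ((a • v) ⊗ₜ[k] w) =
        tripleMap14 S (MonoidAlgebra.of k G x) (actMap14 k w) (actMap14 k v)
          (LinearMap.lTensor (MonoidAlgebra k G) Δ (Δ a)) := by
    intro x v hv w a
    induction a using MonoidAlgebra.induction_on with
    | of g =>
        rw [hΔ g, LinearMap.lTensor_tmul, hΔ g, tripleMap14_tmul, hS g,
          hc _ _ (hcompat g x v hv) w]
        have hgx : MonoidAlgebra.of k G (g * x * g⁻¹) =
            MonoidAlgebra.of k G g *
              (MonoidAlgebra.of k G x * MonoidAlgebra.of k G g⁻¹) := by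
          rw [map_mul, map_mul, mul_assoc]
        rw [hgx]
        simp
    | add f g hf hg =>
        simp only [add_smul, TensorProduct.add_tmul, map_add, hf, hg]
    | smul r f hf =>
        rw [smul_assoc, ← TensorProduct.smul_tmul']
        simp only [map_smul, hf]
  -- (i): compatibility of the coaction with the filtration
  have goal1 : ∀ i : ℕ, ∀ w ∈ subSMul14 (V := V) (H i),
      δ w ∈ ⨆ kk : ℕ, subTensor14 (H kk) (subSMul14 (V := V) (H (i - kk))) := by
    intro i w hw
    have hw' := hspan i w hw
    clear hw
    induction hw' using Submodule.span_induction with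
    | mem w hwmem =>
        obtain ⟨a, ha, v, rfl⟩ := hwmem
        have hv : v ∈ ⨆ x : G, Vx x := hVtop ▸ Submodule.mem_top
        let L : V →ₗ[k] V :=
          ⟨⟨fun u => a • u, fun u w => smul_add a u w⟩, fun r u => smul_comm a r u⟩
        have hle : (⨆ x : G, Vx x) ≤ Submodule.comap (δ ∘ₗ L)
            (⨆ kk : ℕ, subTensor14 (H kk) (subSMul14 (V := V) (H (i - kk)))) := by
          refine iSup_le fun x => ?_
          intro v hvx
          rw [Submodule.mem_comap]
          show δ (a • v) ∈ _
          rw [hΨ x v hvx a]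
          refine transport14 H _ _ i ?_ (D2_mem Δ H hHΔ i a ha)
          intro p q r hpqr a' ha' b hb cc hcc
          rw [tripleMap14_tmul]
          simp only [LinearMap.id_coe, id_eq, actMap14_apply]
          refine Submodule.mem_iSup_of_mem (p + r)
            (mem_subTensor14 (hmul3 p r a' ha' x cc hcc) ?_)
          exact hFanti (show i - (p + r) ≤ q by omega) (hgen q b hb v)
        have hm := hle hv
        rw [Submodule.mem_comap] at hm
        exact hm
    | zero => rw [map_zero]; exact Submodule.zero_mem _
    | add x y hx hy h1 h2 => rw [map_add]; exact Submodule.add_mem _ h1 h2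
    | smul r x hx h1 => rw [map_smul]; exact Submodule.smul_mem _ r h1
  -- (ii) top
  have goal2 : subSMul14 (V := V) (H 0) = ⊤ := by
    rw [eq_top_iff]
    intro v _
    exact Submodule.subset_span ⟨1, hH0 ▸ Submodule.mem_top, v, (one_smul _ v).symm⟩
  -- (ii) separated
  have goal4 : (⨅ i : ℕ, subSMul14 (V := V) (H i)) = ⊥ := by
    refine le_bot_iff.mp (le_trans (iInf_le _ n) ?_)
    refine Submodule.span_le.mpr ?_
    rintro w ⟨a, ha, v, rfl⟩
    rw [hHn, Submodule.mem_bot] at ha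
    simp [ha]
  -- (ii) braiding compatibility
  have goal5 : ∀ i j : ℕ,
      Submodule.map c (subTensor14 (subSMul14 (V := V) (H i)) (subSMul14 (V := V) (H j))) ≤
        ⨆ (kl : ℕ × ℕ) (_ : i + j ≤ kl.1 + kl.2),
          subTensor14 (subSMul14 (V := V) (H kl.1)) (subSMul14 (V := V) (H kl.2)) := by
    intro i j
    rintro t' ⟨t, ht, rfl⟩
    refine subTensor14_induction (motive := fun t => c t ∈
      ⨆ (kl : ℕ × ℕ) (_ : i + j ≤ kl.1 + kl.2),
        subTensor14 (subSMul14 (V := V) (H kl.1)) (subSMul14 (V := V) (H kl.2))) ht ?_ ?_ ?_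
    · beta_reduce
      rw [map_zero]; exact Submodule.zero_mem _
    · intro x y hx hy
      beta_reduce
      rw [map_add]; exact Submodule.add_mem _ hx hy
    · intro u hu w hw
      have hu' := hspan i u hu
      clear hu
      induction hu' using Submodule.span_induction with
      | mem u humem =>
          obtain ⟨a, ha, v, rfl⟩ := humem
          have hv : v ∈ ⨆ x : G, Vx x := hVtop ▸ Submodule.mem_top
          let L2 : V →ₗ[k] V ⊗[k] V :=
            ((TensorProduct.mk k V V).flip w) ∘ₗ
              ⟨⟨fun u => a • u, fun u w => smul_add a u w⟩, fun r u => smul_comm a r u⟩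
          have hle : (⨆ x : G, Vx x) ≤ Submodule.comap (c ∘ₗ L2)
              (⨆ (kl : ℕ × ℕ) (_ : i + j ≤ kl.1 + kl.2),
                subTensor14 (subSMul14 (V := V) (H kl.1)) (subSMul14 (V := V) (H kl.2))) := by
            refine iSup_le fun x => ?_
            intro v hvx
            rw [Submodule.mem_comap]
            show c ((a • v) ⊗ₜ[k] w) ∈ _
            rw [hΘ x v hvx w a]
            refine transport14 H _ _ i ?_ (D2_mem Δ H hHΔ i a ha)
            intro p q r hpqr a' ha' b hb cc hcc
            rw [tripleMap14_tmul]
            simp only [actMap14_apply]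
            have hcond : i + j ≤ (p + r + j) + q := by omega
            refine Submodule.mem_iSup_of_mem (p + r + j, q)
              (Submodule.mem_iSup_of_mem hcond (mem_subTensor14 ?_ (hgen q b hb v)))
            exact hsmulF (p + r) j _ (hmul3 p r a' ha' x cc hcc) w hw
          have hm := hle hv
          rw [Submodule.mem_comap] at hm
          exact hm
      | zero => rw [TensorProduct.zero_tmul, map_zero]; exact Submodule.zero_mem _
      | add x y hx hy h1 h2 =>
          rw [TensorProduct.add_tmul, map_add]; exact Submodule.add_mem _ h1 h2
      | smul r x hx h1 =>
          rw [← TensorProduct.smul_tmul', map_smul]; exact Submodule.smul_mem _ r h1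
  exact ⟨goal1, goal2, hFanti, goal4, goal5⟩
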